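/- arXiv:2008.02233 — 2 statements merged into one kernel-verified Lean document; each statement's English description precedes it below -/
import Mathlib

section
/- Let g : ℂ → ℝ be a function satisfying g(1/x) = |x|⁴ · g(x) for all nonzero x ∈ ℂ. Define T[g](x) = g(x) + g(x/(x-1))/|x-1|⁴ + g(1-x). Then T[g](1-x) = T[g](x) for all x ∈ ℂ with x ≠ 0 and x ≠ 1. -/
theorem stmt_10 (g : ℂ → ℝ)
    (hg : ∀ x : ℂ, x ≠ 0 → g (1/x) = ‖x‖ ^ 4 * g x)
    (T : ℂ → ℝ)
    (hT : ∀ x : ℂ, T x = g x + g (x/(x-1)) / ‖x-1‖ ^ 4 + g (1-x)) :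
    ∀ x : ℂ, x ≠ 0 → x ≠ 1 → T (1-x) = T x := by
  intro x hx0 hx1
  have hx1' : x - 1 ≠ 0 := sub_ne_zero.mpr hx1
  have hy : x / (x - 1) ≠ 0 := div_ne_zero hx0 hx1'
  have key := hg (x / (x - 1)) hy
  have hinv : 1 / (x / (x - 1)) = (x - 1) / x := one_div_div _ _
  rw [hinv] at key
  have habs : ‖x / (x - 1)‖ = ‖x‖ / ‖x - 1‖ :=
    norm_div _ _
  have hax : ‖x‖ ≠ 0 := norm_ne_zero_iff.mpr hx0
  have hax1 : ‖x - 1‖ ≠ 0 := norm_ne_zero_iff.mpr hx1'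
  rw [hT, hT]
  have e1 : (1 : ℂ) - x - 1 = -x := by ring
  have e2 : (1 - x) / (-x) = (x - 1) / x := by
    rw [div_eq_div_iff (neg_ne_zero.mpr hx0) hx0]; ring
  have e3 : (1 : ℂ) - (1 - x) = x := by ring
  rw [e1, e2, e3, key, habs]
  have : ‖-x‖ = ‖x‖ := norm_neg _
  rw [this]
  field_simp
  ring
end

section
/- Let g : ℂ → ℝ be a function satisfying g(1/x) = |x|⁴ · g(x) for all nonzero x ∈ ℂ. Define T[g](x) = g(x) + g(x/(x-1))/|x-1|⁴ + g(1-x). Then T[g](1/x) = |x|⁴ · T[g](x) for all x ∈ ℂ with x ≠ 0 and x ≠ 1. -/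
theorem stmt_11 (g : ℂ → ℝ)
    (hg : ∀ x : ℂ, x ≠ 0 → g (1/x) = ‖x‖ ^ 4 * g x)
    (T : ℂ → ℝ)
    (hT : ∀ x : ℂ, T x = g x + g (x/(x-1)) / ‖x-1‖ ^ 4 + g (1-x)) :
    ∀ x : ℂ, x ≠ 0 → x ≠ 1 → T (1/x) = ‖x‖ ^ 4 * T x := by
  intro x hx0 hx1
  have hx1' : x - 1 ≠ 0 := sub_ne_zero.mpr hx1
  have h1x : (1:ℂ) - x ≠ 0 := sub_ne_zero.mpr (Ne.symm hx1)
  rw [hT, hT]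
  have e1 : (1/x)/((1/x)-1) = 1/(1-x) := by field_simp
  have e2 : (1:ℂ) - 1/x = (x-1)/x := by field_simp
  have e3 : (1:ℂ)/x - 1 = (1-x)/x := by field_simp
  rw [e1, e2, e3]
  have g1 := hg x hx0
  have g2 := hg (1-x) h1x
  have g3 := hg (x/(x-1)) (div_ne_zero hx0 hx1')
  rw [one_div_div] at g3
  rw [g1, g2, g3]
  have habs : ‖1 - x‖ = ‖x - 1‖ := by
    exact norm_sub_rev 1 x
  rw [norm_div, norm_div, habs]
  have ha : ‖x‖ > 0 := norm_pos_iff.mpr hx0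
  have hb : ‖x - 1‖ > 0 := (norm_pos_iff.mpr hx1')
  field_simp
  ring
end
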